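/- For every integer k ≥ 1, the invariant θ_k^{T_k} · δ_k^{D_k} = 2 holds, i.e. the T_k tones and D_k semitones of the k-th family of scales fill exactly one octave. -/

import Mathlib

/-- One step of the tone-breaking recursion, acting on `(θ, δ, T, D)`. -/
def musicStep (s : ℚ × ℚ × ℕ × ℕ) : ℚ × ℚ × ℕ × ℕ :=
  if s.1 < s.2.1 ^ 2 then (s.2.1, s.1 / s.2.1, s.2.2.1 + s.2.2.2, s.2.2.1)
  else (s.1 / s.2.1, s.2.1, s.2.2.1, s.2.2.1 + s.2.2.2)

/-- `music n` is the data `(θ_{n+1}, δ_{n+1}, T_{n+1}, D_{n+1})`. -/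
def music : ℕ → ℚ × ℚ × ℕ × ℕ
  | 0 => (3 / 2, 4 / 3, 1, 1)
  | n + 1 => musicStep (music n)

/-- the tone `θ_k` -/
def tone (k : ℕ) : ℚ := (music (k - 1)).1

/-- the semitone `δ_k` -/
def semitone (k : ℕ) : ℚ := (music (k - 1)).2.1

/-- the number of tones `T_k` -/
def numTones (k : ℕ) : ℕ := (music (k - 1)).2.2.1

/-- the number of semitones `D_k` -/
def numSemitones (k : ℕ) : ℕ := (music (k - 1)).2.2.2

/-- the number of notes `p_k = T_k + D_k` -/
def numNotes (k : ℕ) : ℕ := numTones k + numSemitones k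

/-- For every `k ≥ 1`, the `T_k` tones and `D_k` semitones fill exactly one octave:
`θ_k ^ T_k · δ_k ^ D_k = 2`. -/
lemma music_aux (n : ℕ) :
    0 < (music n).1 ∧ 0 < (music n).2.1 ∧
      (music n).1 ^ (music n).2.2.1 * (music n).2.1 ^ (music n).2.2.2 = 2 := by
  induction n with
  | zero => norm_num [music]
  | succ n ih =>
    obtain ⟨hθ, hδ, hinv⟩ := ih
    rw [music, musicStep]
    split
    · refine ⟨hδ, div_pos hθ hδ, ?_⟩
      simp only
      rw [div_pow, pow_add]
      field_simp
      linear_combination hinv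
    · refine ⟨div_pos hθ hδ, hδ, ?_⟩
      simp only
      rw [div_pow, pow_add]
      field_simp
      linear_combination hinv

theorem octave_invariant :
    ∀ k : ℕ, 1 ≤ k →
      tone k ^ numTones k * semitone k ^ numSemitones k = 2 := by
  intro k _
  exact (music_aux (k - 1)).2.2
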